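/- arXiv:1602.02195 — 3 statements merged into one kernel-verified Lean document; each statement's English description precedes it below -/
import Mathlib

section
/- If γ_A : A → ∏_{λ∈K} A/(t−λ)A is injective, then γ_B : B → ∏_{λ∈K} B/(t−λ)B is injective, and conversely, where B = A[z;α,δ] is an Ore extension and γ_A, γ_B are the products of canonical projections. -/
/- STATEMENT 1: Let `B = A[z;α,δ]` be an Ore extension of an `F`-algebra `A`,
`t ∈ F`, and for each `λ ∈ K` consider the ideals `(t-λ)A` and `(t-λ)B`
(the element `t-λ` is central).  Then `γ_A : A → ∏_{λ∈K} A/(t-λ)A` is injective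
if and only if `γ_B : B → ∏_{λ∈K} B/(t-λ)B` is injective, where `γ_A, γ_B` are
the products of the canonical projections. -/

noncomputable section

private theorem inj_iff_ker {R : Type} [Ring R] {K : Type} (I : K → Ideal R) :
    Function.Injective (fun x : R => fun l : K =>
      (Submodule.Quotient.mk x : R ⧸ I l)) ↔
    ∀ x : R, (∀ l : K, x ∈ I l) → x = 0 := by
  constructor
  · intro h x hx
    have : (fun l : K => (Submodule.Quotient.mk x : R ⧸ I l)) =
        (fun l : K => (Submodule.Quotient.mk (0 : R) : R ⧸ I l)) := by
      funext l
      exact (Submodule.Quotient.eq _).mpr (by simpa using hx l)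
    exact h this
  · intro h x y hxy
    have : x - y = 0 := by
      apply h
      intro l
      exact (Submodule.Quotient.eq _).mp (congrFun hxy l)
    exact sub_eq_zero.mp this

theorem gammaA_injective_iff_gammaB_injective
    (F : Type) [CommRing F] (A : Type) [Ring A] [Algebra F A]
    (B : Type) [Ring B] [Algebra F B] (ι : A →ₐ[F] B) (z : B)
    (α : A ≃ₐ[F] A) (δ : A →ₗ[F] A)
    -- `δ` is a left `α`-derivation:
    (hδ : ∀ x y : A, δ (x * y) = δ x * y + α x * δ y)
    -- the commutation rule of `B = A[z;α,δ]`: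
    (hz : ∀ x : A, z * ι x = ι (α x) * z + ι (δ x))
    -- `B` is a free left `A`-module with basis the powers of `z`:
    (hbasis : ∀ b : B, ∃! p : ℕ →₀ A, b = p.sum fun i c => ι c * z ^ i)
    (t : F) (K : Set F) :
    Function.Injective (fun x : A => fun l : K =>
      (Submodule.Quotient.mk x :
        A ⧸ (Ideal.span {algebraMap F A (t - (l : F))} : Ideal A))) ↔
    Function.Injective (fun b : B => fun l : K =>
      (Submodule.Quotient.mk b :
        B ⧸ (Ideal.span {algebraMap F B (t - (l : F))} : Ideal B))) := by
  classical
  -- uniqueness of coefficients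
  have uniq : ∀ (p q : ℕ →₀ A),
      (p.sum fun i c => ι c * z ^ i) = (q.sum fun i c => ι c * z ^ i) → p = q := by
    intro p q h
    obtain ⟨r, _, hu⟩ := hbasis (p.sum fun i c => ι c * z ^ i)
    exact (hu p rfl).trans (hu q h).symm
  -- ι is injective
  have hι : Function.Injective ι := by
    intro a b hab
    have h1 : ι a = (Finsupp.single 0 a).sum fun i c => ι c * z ^ i := by
      rw [Finsupp.sum_single_index (by simp)]; simp
    have h2 : ι a = (Finsupp.single 0 b).sum fun i c => ι c * z ^ i := by
      rw [Finsupp.sum_single_index (by simp)]; simp [hab]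
    have := uniq _ _ (h1.symm.trans h2)
    simpa using DFunLike.congr_fun this 0
  -- key: membership in span over B iff coefficients in span over A
  have key : ∀ (s : F) (b : B) (p : ℕ →₀ A),
      b = (p.sum fun i c => ι c * z ^ i) →
      b ∈ (Ideal.span {algebraMap F B s} : Ideal B) →
      ∀ i, p i ∈ (Ideal.span {algebraMap F A s} : Ideal A) := by
    intro s b p hp hb i
    obtain ⟨x, hx⟩ := Submodule.mem_span_singleton.mp hb
    obtain ⟨q, hq, _⟩ := hbasis x
    have hr : b = ((q.mapRange (fun c => c * algebraMap F A s) (zero_mul _)).sum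
        fun i c => ι c * z ^ i) := by
      rw [Finsupp.sum_mapRange_index (by simp)]
      rw [← hx, smul_eq_mul, hq, Finsupp.sum_mul]
      refine Finsupp.sum_congr fun j _ => ?_
      rw [map_mul, ι.commutes, mul_assoc, mul_assoc, Algebra.commutes]
    have := uniq _ _ (hp.symm.trans hr)
    rw [this]
    simp only [Finsupp.mapRange_apply]
    exact Submodule.mem_span_singleton.mpr ⟨q i, by simp [smul_eq_mul]⟩
  rw [inj_iff_ker, inj_iff_ker]
  constructor
  · intro hA b hb
    obtain ⟨p, hp, _⟩ := hbasis b
    have hcoef : ∀ i, p i = 0 := by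
      intro i
      apply hA
      intro l
      exact key (t - l) b p hp (hb l) i
    have : p = 0 := Finsupp.ext hcoef
    rw [hp, this, Finsupp.sum_zero_index]
  · intro hB a ha
    have : ι a = 0 := by
      apply hB
      intro l
      obtain ⟨x, hx⟩ := Submodule.mem_span_singleton.mp (ha l)
      refine Submodule.mem_span_singleton.mpr ⟨ι x, ?_⟩
      rw [smul_eq_mul, ← ι.commutes, ← map_mul, ← smul_eq_mul, hx]
    exact hι (by simpa using this)
end
end

section
/- In the skew polynomial ring B = F[h^{±1}][x;α][y;β,δ], where α(h)=th, β(h)=t^{-1}h, β(x)=x, δ(h)=0, δ(x)=a(h)−a(th), the element xy − a(th) is central. -/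
/- STATEMENT 5: In the iterated skew polynomial ring
`B = F[h^{±1}][x;α][y;β,δ]` with `F = ℂ[t,t⁻¹]`, `α(h) = th`, `β(h) = t⁻¹h`,
`β(x) = x`, `δ(h) = 0`, `δ(x) = a(h) - a(th)`, the element `xy - a(th)` is
central.  The ring `B` is presented by its generators `t, t⁻¹, h, h⁻¹, x, y`
and defining relations `xh = thx`, `yh = t⁻¹hy`, `yx = xy + a(h) - a(th)`, with
`t` central, which suffice for the centrality of `xy - a(th)`. -/

noncomputable section
open LaurentPolynomial

/-- Evaluation of a Laurent polynomial `a ∈ ℂ[h^{±1}]` at an invertible element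
`u` (with given inverse `u'`) of a not necessarily commutative ℂ-algebra. -/
def nceval {B : Type} [Ring B] [Algebra ℂ B] (u u' : B)
    (a : LaurentPolynomial ℂ) : B :=
  Finsupp.sum a.coeff fun n c =>
    algebraMap ℂ B c * (if 0 ≤ n then u ^ n.toNat else u' ^ (-n).toNat)

private lemma pow_swap' {B : Type} [Ring B] {b u v : B} (hc : b * u = v * b) :
    ∀ n : ℕ, b * u ^ n = v ^ n * b := by
  intro n
  induction n with
  | zero => simp
  | succ n ih =>
    rw [pow_succ, ← mul_assoc, ih, mul_assoc, hc, pow_succ, mul_assoc]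

private lemma inv_swap {B : Type} [Ring B] {b u u' v v' : B}
    (huu' : u * u' = 1) (hv'v : v' * v = 1) (hc : b * u = v * b) :
    b * u' = v' * b :=
  calc b * u' = (v' * v) * b * u' := by rw [hv'v, one_mul]
    _ = v' * (v * b) * u' := by rw [mul_assoc v' v b]
    _ = v' * (b * u) * u' := by rw [hc]
    _ = v' * b * (u * u') := by rw [mul_assoc v' (b * u) u', mul_assoc b u u',
        ← mul_assoc v' b (u * u')]
    _ = v' * b := by rw [huu', mul_one]

private lemma nceval_swap {B : Type} [Ring B] [Algebra ℂ B]
    {b u u' v v' : B} (hu : b * u = v * b) (hu' : b * u' = v' * b)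
    (a : LaurentPolynomial ℂ) :
    b * nceval u u' a = nceval v v' a * b := by
  unfold nceval
  rw [Finsupp.mul_sum, Finsupp.sum_mul]
  refine Finsupp.sum_congr fun n _ => ?_
  rw [← mul_assoc, ← Algebra.commutes, mul_assoc, mul_assoc]
  congr 1
  split_ifs with hn
  · exact pow_swap' hu _
  · exact pow_swap' hu' _

theorem xy_sub_a_th_central
    (a : LaurentPolynomial ℂ) (ha : a ≠ 0)
    (B : Type) [Ring B] [Algebra ℂ B] (t t' h h' x y : B)
    -- `t` and `h` are invertible:
    (htt' : t * t' = 1) (ht't : t' * t = 1)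
    (hhh' : h * h' = 1) (hh'h : h' * h = 1)
    -- `t` is central:
    (htc : ∀ b : B, t * b = b * t)
    -- the defining relations of `B = F[h^{±1}][x;α][y;β,δ]`:
    (hxh : x * h = t * h * x)
    (hyh : y * h = t' * h * y)
    (hyx : y * x = x * y + nceval h h' a - nceval (t * h) (t' * h') a)
    -- `B` is generated by `t, t⁻¹, h, h⁻¹, x, y`:
    (hgen : Algebra.adjoin ℂ ({t, t', h, h', x, y} : Set B) = ⊤) :
    ∀ b : B, Commute (x * y - nceval (t * h) (t' * h') a) b := by
  -- t' is central
  have htc' : ∀ b : B, t' * b = b * t' := fun b =>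
    (inv_swap htt' ht't (htc b).symm).symm
  -- inverse of t*h is t'*h', etc.
  have hthinv : (t * h) * (t' * h') = 1 := by
    rw [← mul_assoc, mul_assoc t h t', ← htc' h, ← mul_assoc, htt', one_mul, hhh']
  have hthinv' : (t' * h') * (t * h) = 1 := by
    rw [← mul_assoc, mul_assoc t' h' t, ← htc h', ← mul_assoc, ht't, one_mul, hh'h]
  -- derived relations for x
  have hxh' : x * h' = (t' * h') * x := inv_swap hhh' hthinv' hxh
  have hxth : x * (t * h) = (t * (t * h)) * x := by
    rw [← mul_assoc x t h, ← htc x, mul_assoc t x h, hxh, ← mul_assoc]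
  have hxth' : x * (t' * h') = (t' * (t' * h')) * x := by
    rw [← mul_assoc x t' h', ← htc' x, mul_assoc t' x h', hxh', ← mul_assoc]
  -- derived relations for y
  have hyh' : y * h' = (t * h') * y := by
    refine inv_swap hhh' ?_ hyh
    rw [← mul_assoc, mul_assoc t h' t', ← htc' h', ← mul_assoc, htt', one_mul, hh'h]
  have hyth : y * (t * h) = h * y := by
    rw [← mul_assoc y t h, ← htc y, mul_assoc t y h, hyh, ← mul_assoc,
      ← mul_assoc, htt', one_mul]
  have hyth' : y * (t' * h') = h' * y := by
    rw [← mul_assoc y t' h', ← htc' y, mul_assoc t' y h', hyh', ← mul_assoc,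
      ← mul_assoc, ht't, one_mul]
  -- h and h' commute with t*h and t'*h'
  have hhth : h * (t * h) = (t * h) * h := by
    rw [← mul_assoc, htc h]
  have hhth' : h * (t' * h') = (t' * h') * h := by
    rw [← mul_assoc, ← htc' h, mul_assoc, hhh', mul_one, mul_assoc, hh'h, mul_one]
  have hh'th : h' * (t * h) = (t * h) * h' := by
    rw [← mul_assoc, ← htc h', mul_assoc, hh'h, mul_one, mul_assoc, hhh', mul_one]
  have hh'th' : h' * (t' * h') = (t' * h') * h' := by
    rw [← mul_assoc, htc' h']
  -- abbreviations
  set A : B := nceval (t * h) (t' * h') a with hA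
  set Ah : B := nceval h h' a with hAh
  -- A commutes with h, h'
  have hAcommh : h * A = A * h := nceval_swap hhth hhth' a
  have hAcommh' : h' * A = A * h' := nceval_swap hh'th hh'th' a
  -- x * Ah = A * x,  x * A = A2 * x,  y * A = Ah * y
  have hxAh : x * Ah = A * x := nceval_swap hxh hxh' a
  have hxA : x * A = nceval (t * (t * h)) (t' * (t' * h')) a * x :=
    nceval_swap hxth hxth' a
  have hyA : y * A = Ah * y := nceval_swap hyth hyth' a
  -- t and t' commute with A
  have htA : t * A = A * t := htc A
  have ht'A : t' * A = A * t' := htc' A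
  set z : B := x * y - A with hz
  -- commutation with the six generators
  have czt : Commute z t := ((htc z).symm : z * t = t * z)
  have czt' : Commute z t' := ((htc' z).symm : z * t' = t' * z)
  have czh : Commute z h := by
    show z * h = h * z
    have hxyh : x * y * h = h * (x * y) := by
      rw [mul_assoc, hyh, ← mul_assoc, ← mul_assoc, ← htc' x, mul_assoc t' x h,
        hxh, ← mul_assoc, ← mul_assoc, ht't, one_mul, mul_assoc]
    rw [hz, sub_mul, mul_sub, hxyh, hAcommh]
  have czh' : Commute z h' := by
    show z * h' = h' * z
    have hxyh' : x * y * h' = h' * (x * y) := by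
      rw [mul_assoc, hyh', ← mul_assoc, ← mul_assoc, ← htc x, mul_assoc t x h',
        hxh', ← mul_assoc, ← mul_assoc, htt', one_mul, mul_assoc]
    rw [hz, sub_mul, mul_sub, hxyh', hAcommh']
  have czx : Commute z x := by
    show z * x = x * z
    rw [hz, sub_mul, mul_sub, mul_assoc x y x, hyx]
    rw [mul_sub, mul_add, hxAh, hxA]
    abel
  have czy : Commute z y := by
    show z * y = y * z
    rw [hz, sub_mul, mul_sub, ← mul_assoc y x y, hyx, hyA]
    rw [sub_mul, add_mul]
    abel
  -- conclude by adjoin induction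
  intro b
  have hb : b ∈ Algebra.adjoin ℂ ({t, t', h, h', x, y} : Set B) := by
    rw [hgen]; trivial
  induction hb using Algebra.adjoin_induction with
  | mem g hg =>
    simp only [Set.mem_insert_iff, Set.mem_singleton_iff] at hg
    rcases hg with rfl | rfl | rfl | rfl | rfl | rfl
    exacts [czt, czt', czh, czh', czx, czy]
  | algebraMap r => exact (Algebra.commutes r z).symm
  | add u v _ _ hu hv => exact hu.add_right hv
  | mul u v _ _ hu hv => exact hu.mul_right hv
end
end

section
/- The bracket on the commutative algebra ℂ[h^{±1}, x, y] defined by {x,h} = hx, {y,h} = −hy, {y,x} = −a'(h)h (extended by bilinearity and the Leibniz rule) satisfies the Jacobi identity, making ℂ[h^{±1}, x, y] a Poisson algebra. -/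
/- Common setup: the Poisson generalized Weyl algebra
   `A₁ = ℂ[h^{±1},x,y]/⟨xy - a(h)⟩` with Poisson bracket
   `{x,h} = hx`, `{y,h} = -hy`, `{y,x} = -a'(h)h`. -/

noncomputable section
open LaurentPolynomial

/-- `ℂ[h^{±1}]`, the ring of complex Laurent polynomials in `h = T 1`. -/
abbrev L : Type := LaurentPolynomial ℂ

/-- The formal derivative `a'` of a Laurent polynomial `a`. -/
def lderiv (a : L) : L := Finsupp.sum a.coeff fun n c => LaurentPolynomial.C ((n : ℂ) * c) * T (n - 1)

/-- Evaluation of a Laurent polynomial at a (nonzero) complex number `z`. -/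
def leval (z : ℂ) (a : L) : ℂ := Finsupp.sum a.coeff fun n c => c * z ^ n

/-- The Laurent polynomial `a(γ·h)`. -/
def lscale (γ : ℂ) (a : L) : L := Finsupp.sum a.coeff fun n c => LaurentPolynomial.C (c * γ ^ n) * T n

/-- The Laurent polynomial `a(γ·h⁻¹)`. -/
def lsubinv (γ : ℂ) (a : L) : L := Finsupp.sum a.coeff fun n c => LaurentPolynomial.C (c * γ ^ n) * T (-n)

/-- `B₁ = ℂ[h^{±1}, x, y]` (commutative), with `x = X 0`, `y = X 1`. -/
abbrev B1 : Type := MvPolynomial (Fin 2) L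

/-- The inclusion `ℂ[h^{±1}] → ℂ[h^{±1},x,y]`. -/
def ih : L →+* B1 := MvPolynomial.C

/-- `h ∈ B₁`. -/
def Bh : B1 := ih (T 1)
/-- `x ∈ B₁`. -/
def Bx : B1 := MvPolynomial.X 0
/-- `y ∈ B₁`. -/
def By : B1 := MvPolynomial.X 1

/-- The ideal `⟨xy - a(h)⟩` of `ℂ[h^{±1},x,y]`. -/
def GWI (a : L) : Ideal B1 := Ideal.span {Bx * By - ih a}

/-- The Poisson generalized Weyl algebra `A₁ = ℂ[h^{±1},x,y]/⟨xy - a(h)⟩`, as a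
commutative ℂ-algebra. -/
abbrev GW (a : L) : Type := B1 ⧸ GWI a

/-- The canonical projection `B₁ → A₁`. -/
def gp (a : L) : B1 →+* GW a := Ideal.Quotient.mk (GWI a)
/-- `h ∈ A₁`. -/
def gH (a : L) : GW a := gp a Bh
/-- `x ∈ A₁`. -/
def gX (a : L) : GW a := gp a Bx
/-- `y ∈ A₁`. -/
def gY (a : L) : GW a := gp a By
/-- `h^i ∈ A₁`, for `i : ℤ`. -/
def gHp (a : L) (i : ℤ) : GW a := gp a (ih (T i))

/-- `β` is a Poisson bracket on the commutative ℂ-algebra `A`: ℂ-bilinear (via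
linearity in the first argument together with antisymmetry), antisymmetric,
satisfying the Leibniz rule and the Jacobi identity. -/
def IsPoissonBracket {A : Type} [CommRing A] [Algebra ℂ A] (β : A → A → A) : Prop :=
  (∀ (r : ℂ) (u v w : A), β (r • u + v) w = r • β u w + β v w) ∧
  (∀ u v : A, β u v = - β v u) ∧
  (∀ u v w : A, β (u * v) w = u * β v w + β u w * v) ∧
  (∀ u v w : A, β u (β v w) + β v (β w u) + β w (β u v) = 0)

/-- `β` is the Poisson bracket of the Poisson generalized Weyl algebra `A₁`,
determined by `{x,h} = hx`, `{y,h} = -hy`, `{y,x} = -a'(h)h`. -/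
def IsGWBracket (a : L) (β : GW a → GW a → GW a) : Prop :=
  IsPoissonBracket β ∧
  β (gX a) (gH a) = gH a * gX a ∧
  β (gY a) (gH a) = -(gH a * gY a) ∧
  β (gY a) (gX a) = -(gp a (ih (lderiv a)) * gH a)

/-- The homogeneous component `W_k` of `A₁`: `ℂ[h^{±1}]x^k` for `k > 0`,
`ℂ[h^{±1}]` for `k = 0`, and `ℂ[h^{±1}]y^{-k}` for `k < 0`; namely the ℂ-span of
the elements `h^m x^k` (resp. `h^m`, `h^m y^{-k}`) for `m ∈ ℤ`. -/
def W (a : L) (k : ℤ) : Submodule ℂ (GW a) :=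
  Submodule.span ℂ {w | ∃ m : ℤ, w = gHp a m *
    (if 0 ≤ k then gX a ^ k.toNat else gY a ^ (-k).toNat)}

namespace GWAux

open LaurentPolynomial MvPolynomial

/-- The "Euler derivative" `h·d/dh` on Laurent polynomials. -/
def eL (p : L) : L := p.coeff.sum fun n c => LaurentPolynomial.C ((n : ℂ) * c) * T n

lemma eL_zero : eL 0 = 0 := Finsupp.sum_zero_index

lemma eL_single (n : ℤ) (c : ℂ) :
    eL (LaurentPolynomial.C c * T n) = LaurentPolynomial.C ((n : ℂ) * c) * T n := by
  rw [← single_eq_C_mul_T, eL, AddMonoidAlgebra.coeff_single, Finsupp.sum_single_index] <;> simp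

lemma eL_add (p q : L) : eL (p + q) = eL p + eL q := by
  classical
  rw [eL, eL, eL, AddMonoidAlgebra.coeff_add]
  refine Finsupp.sum_add_index' (fun n => by simp) (fun n c d => ?_)
  rw [mul_add, map_add, add_mul]

lemma CT_mul (c d : ℂ) (n m : ℤ) :
    (LaurentPolynomial.C c * T n) * (LaurentPolynomial.C d * T m)
      = LaurentPolynomial.C (c * d) * T (n + m) := by
  rw [map_mul, T_add]; ring

lemma eL_mul (p q : L) : eL (p * q) = eL p * q + p * eL q := by
  induction p using LaurentPolynomial.induction_on' with
  | add p₁ p₂ h₁ h₂ => simp only [add_mul, eL_add, h₁, h₂]; ring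
  | C_mul_T n c =>
    induction q using LaurentPolynomial.induction_on' with
    | add q₁ q₂ h₁ h₂ => simp only [mul_add, eL_add, h₁, h₂]; ring
    | C_mul_T m d =>
      rw [CT_mul, eL_single, eL_single, eL_single, CT_mul, CT_mul, ← add_mul, ← map_add]
      congr 2
      push_cast
      ring

lemma eL_C (c : ℂ) : eL (LaurentPolynomial.C c) = 0 := by
  have : (LaurentPolynomial.C c : L) = LaurentPolynomial.C c * T 0 := by
    rw [T_zero, mul_one]
  rw [this, eL_single]
  simp

lemma eL_natCast (k : ℕ) : eL ((k : ℕ) : L) = 0 := by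
  rw [← map_natCast (LaurentPolynomial.C : ℂ →+* L) k, eL_C]

lemma eL_T_one : eL (T 1) = T 1 := by
  have : (T 1 : L) = LaurentPolynomial.C 1 * T 1 := by rw [map_one, one_mul]
  rw [this, eL_single]
  simp

lemma eL_algebraMap (r : ℂ) : eL (algebraMap ℂ L r) = 0 := by
  rw [← LaurentPolynomial.C_eq_algebraMap, eL_C]

/-- the relation `a'(h)·h = (h d/dh) a`. -/
lemma lderiv_mul_T (a : L) : lderiv a * T 1 = eL a := by
  rw [lderiv, eL, Finsupp.sum_mul]
  refine Finsupp.sum_congr fun n _ => ?_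
  rw [mul_assoc, ← T_add, sub_add_cancel]

/-- The Euler derivative on `B1`, acting on coefficients. -/
def Ee (p : B1) : B1 := (AddMonoidAlgebra.coeff p).sum fun m c => MvPolynomial.monomial m (eL c)

lemma Ee_monomial (m : Fin 2 →₀ ℕ) (c : L) :
    Ee (MvPolynomial.monomial m c) = MvPolynomial.monomial m (eL c) := by
  rw [Ee, MvPolynomial.sum_monomial_eq]
  rw [eL_zero, map_zero]

lemma Ee_add (p q : B1) : Ee (p + q) = Ee p + Ee q := by
  classical
  rw [Ee, Ee, Ee, AddMonoidAlgebra.coeff_add]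
  refine Finsupp.sum_add_index' (fun m => by rw [eL_zero, map_zero]) (fun m c d => ?_)
  rw [eL_add, map_add]

lemma Ee_sub (p q : B1) : Ee (p - q) = Ee p - Ee q := by
  have h := Ee_add (p - q) q
  rw [sub_add_cancel] at h
  rw [eq_sub_iff_add_eq, ← h]

lemma Ee_mul (p q : B1) : Ee (p * q) = Ee p * q + p * Ee q := by
  induction p using MvPolynomial.induction_on' with
  | add p₁ p₂ h₁ h₂ => simp only [add_mul, Ee_add, h₁, h₂]; ring
  | monomial m c =>
    induction q using MvPolynomial.induction_on' with
    | add q₁ q₂ h₁ h₂ => simp only [mul_add, Ee_add, h₁, h₂]; ring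
    | monomial n d =>
      rw [MvPolynomial.monomial_mul, Ee_monomial, Ee_monomial, Ee_monomial,
        MvPolynomial.monomial_mul, MvPolynomial.monomial_mul, eL_mul, map_add]

lemma Ee_C (c : L) : Ee (MvPolynomial.C c) = MvPolynomial.C (eL c) := by
  rw [MvPolynomial.C_apply, Ee_monomial, MvPolynomial.C_apply]

lemma Ee_X (i : Fin 2) : Ee (MvPolynomial.X i : B1) = 0 := by
  rw [MvPolynomial.X, Ee_monomial]
  have : eL (1 : L) = 0 := by rw [← map_one (LaurentPolynomial.C : ℂ →+* L), eL_C]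
  rw [this, map_zero]

lemma Ee_pderiv (i : Fin 2) (p : B1) :
    MvPolynomial.pderiv i (Ee p) = Ee (MvPolynomial.pderiv i p) := by
  induction p using MvPolynomial.induction_on' with
  | add p₁ p₂ h₁ h₂ => rw [Ee_add, map_add, map_add, Ee_add, h₁, h₂]
  | monomial m c =>
    rw [Ee_monomial, MvPolynomial.pderiv_monomial, MvPolynomial.pderiv_monomial, Ee_monomial]
    congr 1
    rw [eL_mul, eL_natCast, mul_zero, add_zero]

lemma pderiv_comm (p : B1) :
    MvPolynomial.pderiv (0 : Fin 2) (MvPolynomial.pderiv (1 : Fin 2) p)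
      = MvPolynomial.pderiv (1 : Fin 2) (MvPolynomial.pderiv (0 : Fin 2) p) := by
  classical
  induction p using MvPolynomial.induction_on' with
  | add p₁ p₂ h₁ h₂ => rw [map_add, map_add, map_add, map_add, h₁, h₂]
  | monomial m c =>
    simp only [MvPolynomial.pderiv_monomial]
    have e1 : ((m - Finsupp.single 1 1 : Fin 2 →₀ ℕ)) 0 = m 0 := by
      rw [Finsupp.tsub_apply, Finsupp.single_eq_of_ne (by decide : (0 : Fin 2) ≠ 1)]
      rfl
    have e2 : ((m - Finsupp.single 0 1 : Fin 2 →₀ ℕ)) 1 = m 1 := by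
      rw [Finsupp.tsub_apply, Finsupp.single_eq_of_ne (by decide : (1 : Fin 2) ≠ 0)]
      rfl
    rw [e1, e2, tsub_right_comm]
    congr 1
    ring

/-- The candidate Poisson bracket on `B₁`, defined via partial derivatives:
`{u,v} = x(u_x·Ev − Eu·v_x) − y(u_y·Ev − Eu·v_y) + a'(h)h(u_x·v_y − u_y·v_x)`
where `E = h·d/dh`. -/
def Br (a : L) (u v : B1) : B1 :=
  Bx * (MvPolynomial.pderiv 0 u * Ee v - Ee u * MvPolynomial.pderiv 0 v)
  - By * (MvPolynomial.pderiv 1 u * Ee v - Ee u * MvPolynomial.pderiv 1 v)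
  + (ih (lderiv a) * Bh) *
      (MvPolynomial.pderiv 0 u * MvPolynomial.pderiv 1 v
        - MvPolynomial.pderiv 1 u * MvPolynomial.pderiv 0 v)

lemma dxBx : MvPolynomial.pderiv (0 : Fin 2) Bx = 1 := MvPolynomial.pderiv_X_self 0
lemma dyBx : MvPolynomial.pderiv (1 : Fin 2) Bx = 0 :=
  MvPolynomial.pderiv_X_of_ne (by decide)
lemma dxBy : MvPolynomial.pderiv (0 : Fin 2) By = 0 :=
  MvPolynomial.pderiv_X_of_ne (by decide)
lemma dyBy : MvPolynomial.pderiv (1 : Fin 2) By = 1 := MvPolynomial.pderiv_X_self 1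
lemma eBx : Ee Bx = 0 := Ee_X 0
lemma eBy : Ee By = 0 := Ee_X 1
lemma dBh (i : Fin 2) : MvPolynomial.pderiv i Bh = 0 := MvPolynomial.pderiv_C
lemma eBh : Ee Bh = Bh := by
  show Ee (MvPolynomial.C (T 1)) = MvPolynomial.C (T 1)
  rw [Ee_C, eL_T_one]

lemma F_eq (a : L) : ih (lderiv a) * Bh = MvPolynomial.C (eL a) := by
  show MvPolynomial.C (lderiv a) * MvPolynomial.C (T 1) = _
  rw [← map_mul, lderiv_mul_T]

lemma dF (a : L) (i : Fin 2) : MvPolynomial.pderiv i (ih (lderiv a) * Bh) = 0 := by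
  rw [F_eq, MvPolynomial.pderiv_C]

lemma eF (a : L) : Ee (ih (lderiv a) * Bh) = MvPolynomial.C (eL (eL a)) := by
  rw [F_eq, Ee_C]

lemma Ee_algC_mul (r : ℂ) (p : B1) :
    Ee (algebraMap ℂ B1 r * p) = algebraMap ℂ B1 r * Ee p := by
  have h : (algebraMap ℂ B1) r = MvPolynomial.C (algebraMap ℂ L r) := by
    exact MvPolynomial.algebraMap_apply r
  rw [h, Ee_mul, Ee_C, eL_algebraMap, map_zero, zero_mul, zero_add]

lemma pd_algC_mul (r : ℂ) (i : Fin 2) (p : B1) :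
    MvPolynomial.pderiv i (algebraMap ℂ B1 r * p)
      = algebraMap ℂ B1 r * MvPolynomial.pderiv i p := by
  have h : (algebraMap ℂ B1) r = MvPolynomial.C (algebraMap ℂ L r) := by
    exact MvPolynomial.algebraMap_apply r
  rw [h, MvPolynomial.pderiv_C_mul]

lemma d_ih (i : Fin 2) (p : L) : MvPolynomial.pderiv i (ih p) = 0 := MvPolynomial.pderiv_C
lemma e_ih (p : L) : Ee (ih p) = ih (eL p) := Ee_C p

lemma pd_add (i : Fin 2) (p q : B1) :
    MvPolynomial.pderiv i (p + q) = MvPolynomial.pderiv i p + MvPolynomial.pderiv i q :=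
  map_add _ _ _

lemma pd_sub (i : Fin 2) (p q : B1) :
    MvPolynomial.pderiv i (p - q) = MvPolynomial.pderiv i p - MvPolynomial.pderiv i q :=
  map_sub _ _ _

end GWAux

set_option maxHeartbeats 1600000

/-- The bracket on `ℂ[h^{±1},x,y]` defined by `{x,h} = hx`,
`{y,h} = -hy`, `{y,x} = -a'(h)h`, extended by ℂ-bilinearity and the Leibniz rule,
satisfies the Jacobi identity, making `ℂ[h^{±1},x,y]` a Poisson algebra. -/
theorem bracket_on_B1_is_poisson (a : L) :
    ∃ β : B1 → B1 → B1,
      (∀ (r : ℂ) (u v w : B1), β (r • u + v) w = r • β u w + β v w) ∧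
      (∀ u v : B1, β u v = - β v u) ∧
      (∀ u v w : B1, β (u * v) w = u * β v w + β u w * v) ∧
      β Bx Bh = Bh * Bx ∧
      β By Bh = -(Bh * By) ∧
      β By Bx = -(ih (lderiv a) * Bh) ∧
      (∀ u v w : B1, β u (β v w) + β v (β w u) + β w (β u v) = 0) := by

  classical
  open GWAux in
  refine ⟨Br a, ?_, ?_, ?_, ?_, ?_, ?_, ?_⟩
  · intro r u v w
    simp only [Algebra.smul_def]
    simp only [Br, pd_add, Ee_add, pd_algC_mul, Ee_algC_mul]
    ring
  · intro u v
    simp only [Br]; ring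
  · intro u v w
    simp only [Br, MvPolynomial.pderiv_mul, Ee_mul]; ring
  · simp only [Br, dxBx, dyBx, eBx, dBh, eBh]; ring
  · simp only [Br, dxBy, dyBy, eBy, dBh, eBh]; ring
  · simp only [Br, dxBx, dyBx, eBx, dxBy, dyBy, eBy]; ring
  · intro u v w
    simp only [Br, pd_add, pd_sub, MvPolynomial.pderiv_mul, Ee_add, Ee_sub, Ee_mul,
      dxBx, dyBx, eBx, dxBy, dyBy, eBy, d_ih, e_ih, dBh, eBh, Ee_pderiv, pderiv_comm]
    ring
end
end
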